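/- Let f(s) = s^p for s ≥ 0, f(s) = 0 for s < 0, and a(s) = 1 + |s|^k, with p > k + 1 > 1. Then lim_{s→+∞} [2f'(s)a(s) − f(s)a'(s)] g⁻¹(s) / (2 a(s)^{3/2} f(s)) = (2p − k)/(k + 2) > 1, where g solves g' = 1/√(a∘g), g(0) = 0. -/

import Mathlib

open Filter Topology

private lemma cont_phi (k : ℝ) (hk : 0 < k) :
    Continuous (fun u : ℝ => Real.sqrt (1 + |u| ^ k)) := by
  apply Real.continuous_sqrt.comp
  exact continuous_const.add (continuous_abs.rpow_const (fun x => Or.inr hk.le))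

private lemma sq_rpow_half (k u : ℝ) (hu : 0 ≤ u) : (u ^ (k/2)) ^ 2 = u ^ k := by
  rw [← Real.rpow_natCast (u ^ (k/2)) 2, ← Real.rpow_mul hu]
  norm_num

private lemma int_bounds (k t : ℝ) (hk : 0 < k) (ht : 0 ≤ t) :
    (2/(k+2)) * t ^ ((k+2)/2) ≤ (∫ u in (0:ℝ)..t, Real.sqrt (1 + |u| ^ k)) ∧
    (∫ u in (0:ℝ)..t, Real.sqrt (1 + |u| ^ k)) ≤ t + (2/(k+2)) * t ^ ((k+2)/2) := by
  have hφ : IntervalIntegrable (fun u : ℝ => Real.sqrt (1 + |u| ^ k)) MeasureTheory.volume 0 t :=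
    (cont_phi k hk).intervalIntegrable 0 t
  have hc1 : Continuous (fun u : ℝ => u ^ (k/2)) :=
    continuous_id.rpow_const (fun x => Or.inr (by positivity))
  have hi1 : IntervalIntegrable (fun u : ℝ => u ^ (k/2)) MeasureTheory.volume 0 t :=
    hc1.intervalIntegrable 0 t
  have hi2 : IntervalIntegrable (fun u : ℝ => 1 + u ^ (k/2)) MeasureTheory.volume 0 t :=
    (continuous_const.add hc1).intervalIntegrable 0 t
  have hval : (∫ u in (0:ℝ)..t, u ^ (k/2)) = (2/(k+2)) * t ^ ((k+2)/2) := by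
    rw [integral_rpow (Or.inl (by linarith))]
    rw [Real.zero_rpow (by positivity : k/2 + 1 ≠ 0)]
    rw [show k/2 + 1 = (k+2)/2 by ring]
    field_simp
    ring
  constructor
  · rw [← hval]
    apply intervalIntegral.integral_mono_on ht hi1 hφ
    intro u hu
    rw [abs_of_nonneg hu.1,
      Real.le_sqrt (Real.rpow_nonneg hu.1 _) (by nlinarith [Real.rpow_nonneg hu.1 k])]
    rw [sq_rpow_half k u hu.1]
    linarith
  · have hub : (∫ u in (0:ℝ)..t, (1 + u ^ (k/2))) = t + (2/(k+2)) * t ^ ((k+2)/2) := by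
      rw [intervalIntegral.integral_add intervalIntegrable_const hi1, hval]
      simp
    rw [← hub]
    apply intervalIntegral.integral_mono_on ht hφ hi2
    intro u hu
    rw [abs_of_nonneg hu.1]
    have h1 : Real.sqrt ((1 + u ^ (k/2))^2) = 1 + u ^ (k/2) :=
      Real.sqrt_sq (by nlinarith [Real.rpow_nonneg hu.1 (k/2)])
    rw [← h1]
    apply Real.sqrt_le_sqrt
    have := sq_rpow_half k u hu.1
    nlinarith [Real.rpow_nonneg hu.1 (k/2)]

private lemma key_alg (x p k G : ℝ) (hx : 0 < x) :
    (2 * (p * x ^ (p-1)) * (1 + x ^ k) - x ^ p * (k * x ^ (k-1))) * G /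
      (2 * (1 + x ^ k) ^ ((3:ℝ)/2) * x ^ p)
    = G / x ^ ((k+2)/2) *
      ((2 * p * x ^ (-k) + (2 * p - k)) / (2 * (x ^ (-k) + 1) ^ ((3:ℝ)/2))) := by
  have hx0 : x ≠ 0 := hx.ne'
  have hv : (0:ℝ) < x ^ k := Real.rpow_pos_of_pos hx k
  have hvne : x ^ k ≠ 0 := hv.ne'
  have h1v : (0:ℝ) < 1 + x ^ k := by linarith
  have e1 : x ^ p = x ^ (p-1) * x := by
    rw [← Real.rpow_add_one hx0]; ring_nf
  have e2 : x ^ (k-1) = x ^ k / x := by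
    rw [eq_div_iff hx0, ← Real.rpow_add_one hx0]; ring_nf
  have e3 : x ^ (-k) = (x ^ k)⁻¹ := Real.rpow_neg hx.le k ▸ rfl
  have e4 : ((x ^ k)⁻¹ + 1) ^ ((3:ℝ)/2)
      = (1 + x ^ k) ^ ((3:ℝ)/2) / (x ^ k) ^ ((3:ℝ)/2) := by
    rw [← Real.div_rpow h1v.le hv.le]
    congr 1
    field_simp
  have e5 : x ^ ((k+2)/2) = (x ^ k) ^ ((3:ℝ)/2) * x / x ^ k := by
    rw [eq_div_iff hvne, ← Real.rpow_mul hx.le, ← Real.rpow_add hx,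
      show (k+2)/2 + k = k*(3/2) + 1 by ring, Real.rpow_add hx, Real.rpow_one]
  have hA : (0:ℝ) < (1 + x ^ k) ^ ((3:ℝ)/2) := Real.rpow_pos_of_pos h1v _
  have hB : (0:ℝ) < (x ^ k) ^ ((3:ℝ)/2) := Real.rpow_pos_of_pos hv _
  have hu : (0:ℝ) < x ^ (p-1) := Real.rpow_pos_of_pos hx _
  rw [e3, e4, e5, e1, e2]
  field_simp
  ring

theorem stmt_14 (a f g ginv : ℝ → ℝ) (k p : ℝ) (hk : 0 < k) (hp : k + 1 < p)
    (hfdef : ∀ s : ℝ, f s = if 0 ≤ s then s ^ p else 0)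
    (hadef : ∀ s : ℝ, a s = 1 + |s| ^ k)
    (hg : ∀ s, HasDerivAt g (1 / Real.sqrt (a (g s))) s) (hg0 : g 0 = 0)
    (hinv1 : ∀ s, ginv (g s) = s) (hinv2 : ∀ t, g (ginv t) = t) :
    Tendsto (fun s => (2 * deriv f s * a s - f s * deriv a s) * ginv s /
        (2 * (a s) ^ ((3:ℝ)/2) * f s)) atTop
      (𝓝 ((2 * p - k) / (k + 2))) ∧ 1 < (2 * p - k) / (k + 2) := by
  have hk2 : (0:ℝ) < k + 2 := by linarith
  constructor
  · -- the limit
    set F : ℝ → ℝ := fun t => ∫ u in (0:ℝ)..t, Real.sqrt (1 + |u| ^ k) with hFdef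
    have hF : ∀ t, HasDerivAt F (Real.sqrt (1 + |t| ^ k)) t := fun t =>
      ((cont_phi k hk).integral_hasStrictDerivAt 0 t).hasDerivAt
    have hapos : ∀ x, 0 < Real.sqrt (a x) := fun x =>
      Real.sqrt_pos.2 (by rw [hadef]; positivity)
    -- F ∘ g - id is constant
    have hW : ∀ s, HasDerivAt (fun s => F (g s) - s) 0 s := by
      intro s
      have h1 := ((hF (g s)).comp s (hg s)).sub (hasDerivAt_id s)
      refine h1.congr_deriv ?_
      rw [← hadef (g s)]
      field_simp [(hapos (g s)).ne']
      ring
    have hFg : ∀ s, F (g s) = s := by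
      intro s
      have hc := is_const_of_deriv_eq_zero (f := fun s => F (g s) - s)
        (fun x => (hW x).differentiableAt) (fun x => (hW x).deriv) s 0
      have hF0 : F (g 0) = 0 := by rw [hg0]; simp [hFdef]
      rw [hF0] at hc
      linarith [hc]
    have hginv : ∀ t, ginv t = F t := by
      intro t
      have := hFg (ginv t)
      rw [hinv2 t] at this
      rw [this]
    -- limit of ginv s / s^((k+2)/2)
    have hB : Tendsto (fun s => ginv s / s ^ ((k+2)/2)) atTop (𝓝 (2/(k+2))) := by
      have hupper : Tendsto (fun s : ℝ => 2/(k+2) + s ^ (-(k/2))) atTop (𝓝 (2/(k+2))) := by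
        simpa using tendsto_const_nhds.add (tendsto_rpow_neg_atTop (half_pos hk))
      apply tendsto_of_tendsto_of_tendsto_of_le_of_le' tendsto_const_nhds hupper
      · filter_upwards [eventually_ge_atTop (1:ℝ)] with s hs
        have hs0 : (0:ℝ) < s := lt_of_lt_of_le one_pos hs
        have hpow : (0:ℝ) < s ^ ((k+2)/2) := Real.rpow_pos_of_pos hs0 _
        rw [hginv s, le_div_iff₀ hpow]
        exact (int_bounds k s hk hs0.le).1
      · filter_upwards [eventually_ge_atTop (1:ℝ)] with s hs
        have hs0 : (0:ℝ) < s := lt_of_lt_of_le one_pos hs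
        have hpow : (0:ℝ) < s ^ ((k+2)/2) := Real.rpow_pos_of_pos hs0 _
        rw [hginv s, div_le_iff₀ hpow, add_mul]
        have hmul : s ^ (-(k/2)) * s ^ ((k+2)/2) = s := by
          rw [← Real.rpow_add hs0, show -(k/2) + (k+2)/2 = 1 by ring, Real.rpow_one]
        rw [hmul]
        linarith [(int_bounds k s hk hs0.le).2]
    -- limit of the algebraic factor
    have h0 : Tendsto (fun s : ℝ => s ^ (-k)) atTop (𝓝 0) := tendsto_rpow_neg_atTop hk
    have hC : Tendsto (fun s : ℝ => (2*p*s^(-k) + (2*p-k)) / (2*(s^(-k)+1) ^ ((3:ℝ)/2)))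
        atTop (𝓝 ((2*p-k)/2)) := by
      have hnum : Tendsto (fun s : ℝ => 2*p*s^(-k) + (2*p-k)) atTop (𝓝 (2*p-k)) := by
        simpa using (h0.const_mul (2*p)).add (tendsto_const_nhds (x := 2*p-k))
      have hden : Tendsto (fun s : ℝ => 2*(s^(-k)+1) ^ ((3:ℝ)/2)) atTop (𝓝 2) := by
        have h1 : Tendsto (fun s : ℝ => (s^(-k)+1) ^ ((3:ℝ)/2)) atTop (𝓝 ((0+1) ^ ((3:ℝ)/2))) :=
          (h0.add tendsto_const_nhds).rpow_const (Or.inr (by norm_num))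
        have := h1.const_mul 2
        norm_num [Real.one_rpow] at this
        simpa using this
      exact hnum.div hden two_ne_zero
    have hprod := hB.mul hC
    have hval : (2/(k+2)) * ((2*p-k)/2) = (2*p-k)/(k+2) := by
      field_simp
    rw [hval] at hprod
    have heq : (fun s => ginv s / s ^ ((k+2)/2) *
        ((2*p*s^(-k) + (2*p-k)) / (2*(s^(-k)+1) ^ ((3:ℝ)/2))))
        =ᶠ[atTop] (fun s => (2 * deriv f s * a s - f s * deriv a s) * ginv s /
          (2 * (a s) ^ ((3:ℝ)/2) * f s)) := by
      filter_upwards [eventually_ge_atTop (1:ℝ)] with s hs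
      have hs0 : (0:ℝ) < s := lt_of_lt_of_le one_pos hs
      have hdf : deriv f s = p * s ^ (p-1) := by
        have hev : f =ᶠ[𝓝 s] fun y => y ^ p := by
          filter_upwards [eventually_gt_nhds hs0] with y hy
          rw [hfdef y, if_pos hy.le]
        rw [hev.deriv_eq]
        exact (Real.hasDerivAt_rpow_const (Or.inl hs0.ne')).deriv
      have hda : deriv a s = k * s ^ (k-1) := by
        have hev : a =ᶠ[𝓝 s] fun y => 1 + y ^ k := by
          filter_upwards [eventually_gt_nhds hs0] with y hy
          rw [hadef y, abs_of_nonneg hy.le]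
        rw [hev.deriv_eq]
        have := ((hasDerivAt_const s (1:ℝ)).add
          (Real.hasDerivAt_rpow_const (p := k) (Or.inl hs0.ne'))).deriv
        simpa using (Real.hasDerivAt_rpow_const (p := k) (Or.inl hs0.ne')).deriv
      rw [hdf, hda, hfdef s, if_pos hs0.le, hadef s, abs_of_nonneg hs0.le]
      exact (key_alg s p k (ginv s) hs0).symm
    exact hprod.congr' heq
  · rw [lt_div_iff₀ hk2]
    linarith
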